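/- Let p be a prime, a ≥ 2 an integer, m = ⌈a/2⌉ and k = a − m = ⌊a/2⌋. Let χ be a primitive Dirichlet character modulo p^a with values in ℂ. Then there exists a unit v ∈ (ZMod (p^k))ˣ such that for every integer u one has χ(1 + p^m·u) = e_{p^k}(v·u), where χ is evaluated at the image of 1 + p^m·u in ZMod (p^a) and e_{p^k} is evaluated at v times the image of u in ZMod (p^k). -/

import Mathlib

open Complex

/-- Every additive character of `ZMod n` with values in `ℂ` is `x ↦ e_n (c x)` for some `c`. -/
lemma addChar_eq_stdAddChar_mul (n : ℕ) [NeZero n] (ψ : AddChar (ZMod n) ℂ) :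
    ∃ c : ZMod n, ∀ x : ZMod n, ψ x = ZMod.stdAddChar (c * x) := by
  have hn : n ≠ 0 := NeZero.ne n
  have h1 : ψ 1 ^ n = 1 := by
    rw [← AddChar.map_nsmul_eq_pow, nsmul_eq_mul, mul_one, ZMod.natCast_self,
      AddChar.map_zero_eq_one]
  obtain ⟨c, _, hc⟩ := (Complex.isPrimitiveRoot_exp n hn).eq_pow_of_pow_eq_one h1
  refine ⟨(c : ZMod n), fun x => ?_⟩
  have hx : ψ x = ψ 1 ^ x.val := by
    conv_lhs => rw [show x = x.val • (1 : ZMod n) by simp [nsmul_eq_mul]]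
    rw [AddChar.map_nsmul_eq_pow]
  have h2 : (c : ZMod n) * x = ((c * x.val : ℤ) : ZMod n) := by
    push_cast [ZMod.natCast_val, ZMod.intCast_cast, ZMod.cast_id]; ring
  rw [hx, h2, ZMod.stdAddChar_coe, ← hc, ← pow_mul, ← Complex.exp_nat_mul]
  congr 1
  push_cast
  ring



/-- For a primitive Dirichlet character `χ` mod `p^a` with `a ≥ 2`, `m = ⌈a/2⌉`, `k = ⌊a/2⌋`,
there is a unit `v` of `ZMod (p^k)` with `χ(1 + p^m u) = e_{p^k}(v·u)` for all integers `u`,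
where `e_{p^k}` is the standard additive character of `ZMod (p^k)`. -/
theorem exists_unit_additivation (p : ℕ) [Fact p.Prime] (a : ℕ) (ha : 2 ≤ a)
    (χ : DirichletCharacter ℂ (p ^ a)) (hχ : χ.IsPrimitive) :
    ∃ v : (ZMod (p ^ (a / 2)))ˣ, ∀ u : ℤ,
      χ (((1 + (p : ℤ) ^ ((a + 1) / 2) * u : ℤ) : ZMod (p ^ a))) =
        ZMod.stdAddChar ((v : ZMod (p ^ (a / 2))) * (u : ZMod (p ^ (a / 2)))) := by
  have hp : p.Prime := Fact.out
  set m := (a + 1) / 2 with hm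
  set k := a / 2 with hk
  have hmk : m + k = a := by omega
  have hm2 : a ≤ 2 * m := by omega
  have hk1 : 1 ≤ k := by omega
  haveI : NeZero (p ^ k) := ⟨pow_ne_zero _ hp.ne_zero⟩
  haveI : NeZero (p ^ a) := ⟨pow_ne_zero _ hp.ne_zero⟩
  -- periodicity mod p^k
  have hper : ∀ u v : ℤ, ((u : ZMod (p ^ k)) = (v : ZMod (p ^ k))) →
      χ ((1 + (p : ℤ) ^ m * u : ℤ) : ZMod (p ^ a)) =
      χ ((1 + (p : ℤ) ^ m * v : ℤ) : ZMod (p ^ a)) := by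
    intro u v huv
    rw [ZMod.intCast_eq_intCast_iff_dvd_sub] at huv
    obtain ⟨t, ht⟩ := huv
    push_cast at ht
    congr 1
    rw [ZMod.intCast_eq_intCast_iff_dvd_sub]
    refine ⟨t, ?_⟩
    push_cast
    have hv : v = u + (p : ℤ) ^ k * t := by linarith
    rw [hv, ← hmk, pow_add]
    ring
  -- multiplicativity
  have hmul : ∀ u v : ℤ,
      χ ((1 + (p : ℤ) ^ m * (u + v) : ℤ) : ZMod (p ^ a)) =
      χ ((1 + (p : ℤ) ^ m * u : ℤ) : ZMod (p ^ a)) *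
      χ ((1 + (p : ℤ) ^ m * v : ℤ) : ZMod (p ^ a)) := by
    intro u v
    rw [← map_mul]
    congr 1
    rw [← Int.cast_mul, ZMod.intCast_eq_intCast_iff_dvd_sub]
    refine ⟨(p : ℤ) ^ (2 * m - a) * (u * v), ?_⟩
    have hpow : ((p : ℤ) ^ a) * (p : ℤ) ^ (2 * m - a) = (p : ℤ) ^ m * (p : ℤ) ^ m := by
      rw [← pow_add, ← pow_add]; congr 1; omega
    push_cast
    linear_combination (-(u * v)) * hpow
  -- evaluation only depends on the residue mod p^k
  have hval : ∀ (x : ZMod (p ^ k)) (u : ℤ), ((u : ZMod (p ^ k)) = x) →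
      χ ((1 + (p : ℤ) ^ m * u : ℤ) : ZMod (p ^ a)) =
      χ ((1 + (p : ℤ) ^ m * (x.val : ℤ) : ℤ) : ZMod (p ^ a)) := by
    intro x u hu
    apply hper
    rw [hu]
    push_cast [ZMod.natCast_zmod_val]
    rfl
  let ψ : AddChar (ZMod (p ^ k)) ℂ :=
    { toFun := fun x => χ ((1 + (p : ℤ) ^ m * (x.val : ℤ) : ℤ) : ZMod (p ^ a)),
      map_zero_eq_one' := by
        simp only [ZMod.val_zero, Nat.cast_zero, mul_zero, add_zero, Int.cast_one]
        exact map_one χ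
      map_add_eq_mul' := by
        intro x y
        have h1 := hval (x + y) ((x.val : ℤ) + (y.val : ℤ)) (by
          push_cast [ZMod.natCast_zmod_val]
          rfl)
        show χ ((1 + (p : ℤ) ^ m * ((x + y).val : ℤ) : ℤ) : ZMod (p ^ a)) =
          χ ((1 + (p : ℤ) ^ m * (x.val : ℤ) : ℤ) : ZMod (p ^ a)) *
          χ ((1 + (p : ℤ) ^ m * (y.val : ℤ) : ℤ) : ZMod (p ^ a))
        rw [← h1]
        exact hmul _ _ }
  have hψ : ∀ u : ℤ, χ ((1 + (p : ℤ) ^ m * u : ℤ) : ZMod (p ^ a)) = ψ (u : ZMod (p ^ k)) :=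
    fun u => hval _ u rfl
  obtain ⟨c, hc⟩ := addChar_eq_stdAddChar_mul (p ^ k) ψ
  have key : ∀ u : ℤ, χ ((1 + (p : ℤ) ^ m * u : ℤ) : ZMod (p ^ a)) =
      ZMod.stdAddChar (c * (u : ZMod (p ^ k))) := by
    intro u; rw [hψ, hc]
  -- c is a unit
  have hcu : IsUnit c := by
    by_contra hnc
    have hpc : p ∣ c.val := by
      by_contra hpd
      refine hnc ?_
      have h1 : IsUnit ((c.val : ZMod (p ^ k))) :=
        (ZMod.isUnit_iff_coprime _ _).mpr
          (((Nat.Prime.coprime_iff_not_dvd hp).mpr hpd).symm.pow_right k)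
      rwa [ZMod.natCast_zmod_val] at h1
    obtain ⟨t, htc⟩ := hpc
    have hczero : ∀ s : ℤ, c * ((p : ZMod (p ^ k)) ^ (k - 1) * (s : ZMod (p ^ k))) = 0 := by
      intro s
      have hc2 : c = (p : ZMod (p ^ k)) * t := by
        rw [← ZMod.natCast_zmod_val c, htc]; push_cast; ring
      have hpk : (p : ZMod (p ^ k)) * (p : ZMod (p ^ k)) ^ (k - 1) = 0 := by
        have hz : (p : ZMod (p ^ k)) ^ k = 0 := by
          rw [← Nat.cast_pow, ZMod.natCast_self]
        rw [← pow_succ', show k - 1 + 1 = k by omega, hz]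
      rw [hc2]
      calc (p : ZMod (p ^ k)) * t * ((p : ZMod (p ^ k)) ^ (k - 1) * s)
          = ((p : ZMod (p ^ k)) * (p : ZMod (p ^ k)) ^ (k - 1)) * (t * s) := by ring
        _ = 0 := by rw [hpk, zero_mul]
    -- χ factors through p^(a-1)
    have hd : p ^ (a - 1) ∣ p ^ a := pow_dvd_pow p (by omega)
    have hft : χ.FactorsThrough (p ^ (a - 1)) := by
      rw [DirichletCharacter.factorsThrough_iff_ker_unitsMap hd]
      intro u hu
      rw [MonoidHom.mem_ker] at hu ⊢
      rw [← Units.val_inj, MulChar.coe_toUnitHom, Units.val_one]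
      rw [← Units.val_inj, Units.val_one, ZMod.unitsMap_def, Units.coe_map] at hu
      have h1 : (ZMod.castHom hd (ZMod (p ^ (a - 1)))) u.val
          = ((u.val.val : ℤ) : ZMod (p ^ (a - 1))) := by simp
      rw [MonoidHom.coe_coe, h1,
        show (1 : ZMod (p ^ (a - 1))) = ((1 : ℤ) : ZMod (p ^ (a - 1))) by norm_cast,
        ZMod.intCast_eq_intCast_iff_dvd_sub] at hu
      obtain ⟨s, hs⟩ := hu
      push_cast at hs
      have hu2 : (u : ZMod (p ^ a)) =
          ((1 + (p : ℤ) ^ m * ((p : ℤ) ^ (k - 1) * (-s)) : ℤ) : ZMod (p ^ a)) := by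
        have heq : (u.val.val : ℤ) = 1 + (p : ℤ) ^ m * ((p : ℤ) ^ (k - 1) * (-s)) := by
          have hexp : (p : ℤ) ^ m * (p : ℤ) ^ (k - 1) = (p : ℤ) ^ (a - 1) := by
            rw [← pow_add]; congr 1; omega
          rw [← mul_assoc, hexp]
          linarith [hs]
        rw [← heq]
        simp [ZMod.natCast_val, ZMod.intCast_cast, ZMod.cast_id]
      rw [hu2, key]
      have hcast : ((((p : ℤ) ^ (k - 1) * (-s) : ℤ)) : ZMod (p ^ k))
          = (p : ZMod (p ^ k)) ^ (k - 1) * ((-s : ℤ) : ZMod (p ^ k)) := by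
        push_cast; ring
      rw [hcast, hczero, AddChar.map_zero_eq_one]
    have hle : χ.conductor ≤ p ^ (a - 1) := Nat.sInf_le hft
    rw [hχ] at hle
    exact absurd hle (not_le.mpr (Nat.pow_lt_pow_right hp.one_lt (by omega)))
  refine ⟨hcu.unit, fun u => ?_⟩
  rw [key u, IsUnit.unit_spec]
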